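/- arXiv:1103.0726 — 4 statements merged into one kernel-verified Lean document; each statement's English description precedes it below -/
import Mathlib

section
/- Let H > 0 and α > 1. There exists a constant C_{H,α} > 0 such that for every f ∈ C¹([0,H]), ∫₀^H y^{α−2} f(y)² dy ≤ C_{H,α} ∫₀^H y^α (f(y)² + f'(y)²) dy. -/
open MeasureTheory Set

lemma young_abs_aux {u v t e : ℝ} (hu : 0 ≤ u) (hv : 0 ≤ v) (he : 0 < e) (h : t ^ 2 = u * v) :
    |2 * t| ≤ e * u + e⁻¹ * v := by
  have hX : 0 ≤ e * u + e⁻¹ * v := by positivity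
  have h1 : (e * u) * (e⁻¹ * v) = u * v := by field_simp
  have hsq : (2 * t) ^ 2 ≤ (e * u + e⁻¹ * v) ^ 2 := by
    nlinarith [sq_nonneg (e * u - e⁻¹ * v)]
  rw [abs_le]
  exact abs_le_of_sq_le_sq' hsq hX

set_option maxHeartbeats 1600000 in
/-- Weighted Hardy-type inequality: for `H > 0` and `α > 1` there is `C_{H,α} > 0` such that
for every `f ∈ C¹([0,H])`,
`∫₀^H y^{α-2} f(y)² dy ≤ C_{H,α} ∫₀^H y^α (f(y)² + f'(y)²) dy`. -/
theorem weighted_hardy_C1 (H α : ℝ) (hH : 0 < H) (hα : 1 < α) :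
    ∃ C : ℝ, 0 < C ∧ ∀ f : ℝ → ℝ, ContDiffOn ℝ 1 f (Icc 0 H) →
      ∫⁻ y in Ioo 0 H, ENNReal.ofReal (y ^ (α - 2) * f y ^ 2)
        ≤ ENNReal.ofReal C *
            ∫⁻ y in Ioo 0 H,
              ENNReal.ofReal (y ^ α * (f y ^ 2 + derivWithin f (Icc 0 H) y ^ 2)) := by
  have ha : (0:ℝ) < α - 1 := by linarith
  have hH2 : (0:ℝ) < H / 2 := by positivity
  set K : ℝ := (2 / H + 1) * (H / 2) ^ (-α) with hKdef
  have hKpos : 0 < K := by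
    have := Real.rpow_pos_of_pos hH2 (-α)
    positivity
  have hPpos : 0 < H ^ (α - 1) := Real.rpow_pos_of_pos hH _
  set C : ℝ := 2 / (α - 1) * (H ^ (α - 1) * K + 2 / (α - 1)) with hCdef
  have hCpos : 0 < C := by positivity
  refine ⟨C, hCpos, ?_⟩
  intro f hf
  set f' := derivWithin f (Icc 0 H) with hf'def
  have hfc : ContinuousOn f (Icc 0 H) := hf.continuousOn
  have hf'c : ContinuousOn f' (Icc 0 H) :=
    hf.continuousOn_derivWithin (uniqueDiffOn_Icc hH) le_rfl
  -- derivative at interior points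
  have hfd : ∀ y ∈ Ioo 0 H, HasDerivAt f (f' y) y := by
    intro y hy
    have h1 : Icc (0:ℝ) H ∈ nhds y := Icc_mem_nhds hy.1 hy.2
    exact ((hf.differentiableOn one_ne_zero y (Ioo_subset_Icc_self hy)).hasDerivWithinAt).hasDerivAt h1
  -- integrability of power-weighted continuous functions
  have hrpowInt : ∀ p : ℝ, -1 < p → ∀ g : ℝ → ℝ, ContinuousOn g (Icc 0 H) →
      IntervalIntegrable (fun y => y ^ p * g y) volume 0 H := by
    intro p hp g hg
    have h1 : IntervalIntegrable (fun y : ℝ => y ^ p) volume 0 H :=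
      intervalIntegral.intervalIntegrable_rpow' hp
    have h2 : uIcc (0:ℝ) H = Icc 0 H := uIcc_of_le hH.le
    exact h1.mul_continuousOn (h2 ▸ hg)
  have hIoo : ∀ g : ℝ → ℝ, IntervalIntegrable g volume 0 H → IntegrableOn g (Ioo 0 H) := by
    intro g hg
    exact ((intervalIntegrable_iff_integrableOn_Ioc_of_le hH.le).mp hg).mono_set
      Ioo_subset_Ioc_self
  have hfsqc : ContinuousOn (fun y => f y ^ 2) (Icc 0 H) := hfc.pow 2
  have hf'sqc : ContinuousOn (fun y => f' y ^ 2) (Icc 0 H) := hf'c.pow 2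
  have hsumc : ContinuousOn (fun y => f y ^ 2 + f' y ^ 2) (Icc 0 H) := hfsqc.add hf'sqc
  have hA_ii : IntervalIntegrable (fun y => y ^ (α - 2) * f y ^ 2) volume 0 H :=
    hrpowInt (α - 2) (by linarith) _ hfsqc
  have hI_ii : IntervalIntegrable (fun y => y ^ (α - 1) * (2 * f y * f' y)) volume 0 H :=
    hrpowInt (α - 1) (by linarith) _ (by
      exact (continuousOn_const.mul hfc).mul hf'c)
  have hB_ii : IntervalIntegrable (fun y => y ^ α * (f y ^ 2 + f' y ^ 2)) volume 0 H :=
    hrpowInt α (by linarith) _ hsumc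
  have hB2_ii : IntervalIntegrable (fun y => y ^ α * f' y ^ 2) volume 0 H :=
    hrpowInt α (by linarith) _ hf'sqc
  have hBf_ii : IntervalIntegrable (fun y => y ^ α * f y ^ 2) volume 0 H :=
    hrpowInt α (by linarith) _ hfsqc
  have hA_int : IntegrableOn (fun y => y ^ (α - 2) * f y ^ 2) (Ioo 0 H) := hIoo _ hA_ii
  have hI_int : IntegrableOn (fun y => y ^ (α - 1) * (2 * f y * f' y)) (Ioo 0 H) := hIoo _ hI_ii
  have hB_int : IntegrableOn (fun y => y ^ α * (f y ^ 2 + f' y ^ 2)) (Ioo 0 H) := hIoo _ hB_ii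
  have hB2_int : IntegrableOn (fun y => y ^ α * f' y ^ 2) (Ioo 0 H) := hIoo _ hB2_ii
  have hBf_int : IntegrableOn (fun y => y ^ α * f y ^ 2) (Ioo 0 H) := hIoo _ hBf_ii
  set A : ℝ := ∫ y in Ioo 0 H, y ^ (α - 2) * f y ^ 2 with hAdef
  set B : ℝ := ∫ y in Ioo 0 H, y ^ α * (f y ^ 2 + f' y ^ 2) with hBdef
  set B2 : ℝ := ∫ y in Ioo 0 H, y ^ α * f' y ^ 2 with hB2def
  set I : ℝ := ∫ y in Ioo 0 H, y ^ (α - 1) * (2 * f y * f' y) with hIdef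
  clear_value A B B2 I
  have hA_nonneg : 0 ≤ A := by
    rw [hAdef]
    apply setIntegral_nonneg measurableSet_Ioo
    intro y hy
    exact mul_nonneg (Real.rpow_nonneg hy.1.le _) (sq_nonneg _)
  have hB2_nonneg : 0 ≤ B2 := by
    rw [hB2def]
    apply setIntegral_nonneg measurableSet_Ioo
    intro y hy
    exact mul_nonneg (Real.rpow_nonneg hy.1.le _) (sq_nonneg _)
  have hBf_nonneg : 0 ≤ ∫ y in Ioo 0 H, y ^ α * f y ^ 2 := by
    apply setIntegral_nonneg measurableSet_Ioo
    intro y hy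
    exact mul_nonneg (Real.rpow_nonneg hy.1.le _) (sq_nonneg _)
  have hB_nonneg_ae : 0 ≤ᵐ[volume.restrict (Ioo 0 H)] fun y => y ^ α * (f y ^ 2 + f' y ^ 2) := by
    filter_upwards [ae_restrict_mem measurableSet_Ioo] with y hy
    exact mul_nonneg (Real.rpow_nonneg hy.1.le _) (by positivity)
  have hB_eq : B = (∫ y in Ioo 0 H, y ^ α * f y ^ 2) + B2 := by
    rw [hBdef, hB2def, ← integral_add hBf_int hB2_int]
    congr 1; ext y; ring
  have hB2_le_B : B2 ≤ B := by rw [hB_eq]; linarith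
  have hB_nonneg : 0 ≤ B := le_trans hB2_nonneg hB2_le_B
  -- FTC for F y = y^(α-1) * f y ^ 2
  have hFcont : ContinuousOn (fun y : ℝ => y ^ (α - 1) * f y ^ 2) (Icc 0 H) := by
    apply ContinuousOn.mul ?_ hfsqc
    intro y _
    exact (Real.continuousAt_rpow_const y (α - 1) (Or.inr (by linarith))).continuousWithinAt
  have hFTC : ∫ y in (0:ℝ)..H,
      ((α - 1) * y ^ (α - 2) * f y ^ 2 + y ^ (α - 1) * (2 * f y * f' y))
      = H ^ (α - 1) * f H ^ 2 := by
    have := intervalIntegral.integral_eq_sub_of_hasDeriv_right_of_le hH.le hFcont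
      (f' := fun y => (α - 1) * y ^ (α - 2) * f y ^ 2 + y ^ (α - 1) * (2 * f y * f' y))
      (fun y hy => by
        have h1 : HasDerivAt (fun x : ℝ => x ^ (α - 1)) ((α - 1) * y ^ (α - 2)) y := by
          have := Real.hasDerivAt_rpow_const (x := y) (p := α - 1) (Or.inl (ne_of_gt hy.1))
          rwa [show α - 1 - 1 = α - 2 by ring] at this
        have h2 : HasDerivAt (fun x => f x ^ 2) (2 * f y * f' y) y := by
          have := (hfd y hy).fun_pow 2
          simpa using this
        exact ((h1.mul h2).hasDerivWithinAt)) ?_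
    · rw [this, Real.zero_rpow (show α - 1 ≠ 0 by intro h; rw [h] at ha; exact lt_irrefl 0 ha)]
      ring
    · have h3 : IntervalIntegrable
          (fun y => (α - 1) * (y ^ (α - 2) * f y ^ 2) + y ^ (α - 1) * (2 * f y * f' y))
          volume 0 H := (hA_ii.const_mul (α - 1)).add hI_ii
      have h4 : (fun y : ℝ => (α - 1) * (y ^ (α - 2) * f y ^ 2) + y ^ (α - 1) * (2 * f y * f' y))
          = fun y => (α - 1) * y ^ (α - 2) * f y ^ 2 + y ^ (α - 1) * (2 * f y * f' y) := by
        funext y; ring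
      rwa [h4] at h3
  -- split the FTC identity
  have hsplit : (α - 1) * A + I = H ^ (α - 1) * f H ^ 2 := by
    rw [hAdef, hIdef, ← hFTC, intervalIntegral.integral_of_le hH.le,
      integral_Ioc_eq_integral_Ioo]
    have h3 : IntegrableOn (fun y : ℝ => (α - 1) * (y ^ (α - 2) * f y ^ 2)) (Ioo 0 H) :=
      hA_int.const_mul (α - 1)
    have h4 : (fun y : ℝ => (α - 1) * y ^ (α - 2) * f y ^ 2 + y ^ (α - 1) * (2 * f y * f' y))
        = fun y => (α - 1) * (y ^ (α - 2) * f y ^ 2) + y ^ (α - 1) * (2 * f y * f' y) := by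
      funext y; ring
    rw [h4, integral_add h3 hI_int, integral_const_mul]
  -- pointwise Young bound for the cross term
  have hptwise : ∀ y ∈ Ioo (0:ℝ) H,
      |y ^ (α - 1) * (2 * f y * f' y)|
        ≤ (α - 1) / 2 * (y ^ (α - 2) * f y ^ 2) + 2 / (α - 1) * (y ^ α * f' y ^ 2) := by
    intro y hy
    have hy0 : (0:ℝ) < y := hy.1
    set u : ℝ := y ^ (α - 2) * f y ^ 2 with hu
    set v : ℝ := y ^ α * f' y ^ 2 with hv
    set t : ℝ := y ^ (α - 1) * (f y * f' y) with ht
    have hu0 : 0 ≤ u := mul_nonneg (Real.rpow_nonneg hy0.le _) (sq_nonneg _)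
    have hv0 : 0 ≤ v := mul_nonneg (Real.rpow_nonneg hy0.le _) (sq_nonneg _)
    have htsq : t ^ 2 = u * v := by
      have h0 : (y ^ (α - 1)) ^ 2 = y ^ (α - 2) * y ^ α := by
        rw [sq, ← Real.rpow_add hy0, ← Real.rpow_add hy0]
        congr 1; ring
      calc t ^ 2 = (y ^ (α - 1)) ^ 2 * (f y ^ 2 * f' y ^ 2) := by rw [ht]; ring
        _ = (y ^ (α - 2) * y ^ α) * (f y ^ 2 * f' y ^ 2) := by rw [h0]
        _ = u * v := by rw [hu, hv]; ring
    have habs : y ^ (α - 1) * (2 * f y * f' y) = 2 * t := by rw [ht]; ring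
    have hy2 := young_abs_aux hu0 hv0 (show (0:ℝ) < (α - 1) / 2 by positivity) htsq
    rw [show ((α - 1) / 2)⁻¹ = 2 / (α - 1) by rw [inv_div]] at hy2
    rw [habs]
    exact hy2
  have hIbound : |I| ≤ (α - 1) / 2 * A + 2 / (α - 1) * B2 := by
    calc |I| ≤ ∫ y in Ioo 0 H, |y ^ (α - 1) * (2 * f y * f' y)| := by
          rw [hIdef]
          have hnn := norm_integral_le_integral_norm (μ := volume.restrict (Ioo 0 H))
            (f := fun y => y ^ (α - 1) * (2 * f y * f' y))
          simp only [Real.norm_eq_abs] at hnn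
          exact hnn
      _ ≤ ∫ y in Ioo 0 H,
            ((α - 1) / 2 * (y ^ (α - 2) * f y ^ 2) + 2 / (α - 1) * (y ^ α * f' y ^ 2)) := by
          apply setIntegral_mono_on (hI_int.abs) ?_ measurableSet_Ioo hptwise
          exact (hA_int.const_mul _).add (hB2_int.const_mul _)
      _ = (α - 1) / 2 * A + 2 / (α - 1) * B2 := by
          rw [hAdef, hB2def, integral_add (hA_int.const_mul _) (hB2_int.const_mul _),
            integral_const_mul, integral_const_mul]
  -- boundary term bound : f H ^ 2 ≤ K * B
  have hIccsub : Icc (H / 2) H ⊆ Icc 0 H := Icc_subset_Icc (by positivity) le_rfl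
  have hsum_int : IntegrableOn (fun t => f t ^ 2 + f' t ^ 2) (Ioo (H / 2) H) :=
    ((hsumc.mono hIccsub).integrableOn_Icc).mono_set Ioo_subset_Icc_self
  set D : ℝ := ∫ t in Ioo (H / 2) H, (f t ^ 2 + f' t ^ 2) with hDdef
  clear_value D
  have hfy : ∀ y ∈ Icc (H / 2) H, f H ^ 2 ≤ f y ^ 2 + D := by
    intro y hy
    have hy0 : (0:ℝ) < y := lt_of_lt_of_le hH2 hy.1
    have hftc2 : ∫ t in y..H, 2 * f t * f' t = f H ^ 2 - f y ^ 2 := by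
      apply intervalIntegral.integral_eq_sub_of_hasDeriv_right_of_le hy.2
      · exact (hfc.mono (Icc_subset_Icc hy0.le le_rfl)).pow 2
      · intro t ht
        have ht' : t ∈ Ioo 0 H := ⟨lt_trans hy0 ht.1, ht.2⟩
        have := (hfd t ht').fun_pow 2
        simpa using this.hasDerivWithinAt
      · apply ContinuousOn.intervalIntegrable
        have : uIcc y H = Icc y H := uIcc_of_le hy.2
        rw [this]
        exact ((continuousOn_const.mul hfc).mul hf'c).mono (Icc_subset_Icc hy0.le le_rfl)
    have hmono : ∫ t in y..H, 2 * f t * f' t ≤ D := by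
      have hII : IntervalIntegrable (fun t => 2 * f t * f' t) volume y H := by
        apply ContinuousOn.intervalIntegrable
        rw [uIcc_of_le hy.2]
        exact ((continuousOn_const.mul hfc).mul hf'c).mono (Icc_subset_Icc hy0.le le_rfl)
      have hII2 : IntervalIntegrable (fun t => f t ^ 2 + f' t ^ 2) volume y H := by
        apply ContinuousOn.intervalIntegrable
        rw [uIcc_of_le hy.2]
        exact hsumc.mono (Icc_subset_Icc hy0.le le_rfl)
      calc ∫ t in y..H, 2 * f t * f' t ≤ ∫ t in y..H, (f t ^ 2 + f' t ^ 2) := by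
            apply intervalIntegral.integral_mono_on hy.2 hII hII2
            intro t _
            nlinarith [sq_nonneg (f t - f' t)]
        _ = ∫ t in Ioo y H, (f t ^ 2 + f' t ^ 2) := by
            rw [intervalIntegral.integral_of_le hy.2, integral_Ioc_eq_integral_Ioo]
        _ ≤ D := by
            rw [hDdef]
            apply setIntegral_mono_set hsum_int
            · filter_upwards [ae_restrict_mem measurableSet_Ioo] with t _
              positivity
            · exact Filter.Eventually.of_forall
                (fun t ht => ⟨lt_of_le_of_lt hy.1 ht.1, ht.2⟩)
    linarith [hftc2 ▸ hmono]
  have hbd : f H ^ 2 ≤ K * B := by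
    have hvol : (volume (Ioo (H / 2) H)).toReal = H / 2 := by
      rw [Real.volume_Ioo, ENNReal.toReal_ofReal (by linarith)]
      ring
    have hint1 : (H / 2) * f H ^ 2 ≤ D + (H / 2) * D := by
      have h5 : ∫ (_ : ℝ) in Ioo (H / 2) H, f H ^ 2 ≤ ∫ y in Ioo (H / 2) H, (f y ^ 2 + D) := by
        apply setIntegral_mono_on _ _ measurableSet_Ioo
          (fun y hy => hfy y (Ioo_subset_Icc_self hy))
        · exact (integrableOn_const_iff).mpr (Or.inr (by rw [Real.volume_Ioo]; exact ENNReal.ofReal_lt_top))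
        · exact (((hfsqc.mono hIccsub).integrableOn_Icc).mono_set Ioo_subset_Icc_self).add
            ((integrableOn_const_iff).mpr (Or.inr (by rw [Real.volume_Ioo]; exact ENNReal.ofReal_lt_top)))
      rw [setIntegral_const, measureReal_def, hvol, smul_eq_mul, mul_comm] at h5
      rw [integral_add (((hfsqc.mono hIccsub).integrableOn_Icc).mono_set Ioo_subset_Icc_self)
        ((integrableOn_const_iff).mpr (Or.inr (by rw [Real.volume_Ioo]; exact ENNReal.ofReal_lt_top))),
        setIntegral_const, measureReal_def, hvol, smul_eq_mul] at h5
      have h6 : ∫ y in Ioo (H / 2) H, f y ^ 2 ≤ D := by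
        rw [hDdef]
        apply setIntegral_mono_on (((hfsqc.mono hIccsub).integrableOn_Icc).mono_set
          Ioo_subset_Icc_self) hsum_int measurableSet_Ioo
        intro y _
        nlinarith [sq_nonneg (f' y)]
      linarith [h5, h6]
    have hDB : D ≤ (H / 2) ^ (-α) * B := by
      have h7 : D ≤ ∫ t in Ioo (H / 2) H, (H / 2) ^ (-α) * (t ^ α * (f t ^ 2 + f' t ^ 2)) := by
        rw [hDdef]
        apply setIntegral_mono_on hsum_int _ measurableSet_Ioo
        · intro t ht
          have ht0 : (0:ℝ) < t := lt_trans hH2 ht.1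
          have h8 : (1:ℝ) ≤ (H / 2) ^ (-α) * t ^ α := by
            rw [Real.rpow_neg hH2.le]
            rw [inv_mul_eq_div, le_div_iff₀ (Real.rpow_pos_of_pos hH2 α), one_mul]
            exact Real.rpow_le_rpow hH2.le ht.1.le (by linarith)
          calc f t ^ 2 + f' t ^ 2 = 1 * (f t ^ 2 + f' t ^ 2) := by ring
            _ ≤ ((H / 2) ^ (-α) * t ^ α) * (f t ^ 2 + f' t ^ 2) := by
                apply mul_le_mul_of_nonneg_right h8 (by positivity)
            _ = (H / 2) ^ (-α) * (t ^ α * (f t ^ 2 + f' t ^ 2)) := by ring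
        · exact (hB_int.mono_set (fun t ht => ⟨lt_trans hH2 ht.1, ht.2⟩)).const_mul _
      have h9 : ∫ t in Ioo (H / 2) H, (H / 2) ^ (-α) * (t ^ α * (f t ^ 2 + f' t ^ 2))
          = (H / 2) ^ (-α) * ∫ t in Ioo (H / 2) H, t ^ α * (f t ^ 2 + f' t ^ 2) :=
        integral_const_mul _ _
      have h10 : ∫ t in Ioo (H / 2) H, t ^ α * (f t ^ 2 + f' t ^ 2) ≤ B := by
        rw [hBdef]
        apply setIntegral_mono_set hB_int hB_nonneg_ae
        exact Filter.Eventually.of_forall (fun t ht => ⟨lt_trans hH2 ht.1, ht.2⟩)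
      calc D ≤ (H / 2) ^ (-α) * ∫ t in Ioo (H / 2) H, t ^ α * (f t ^ 2 + f' t ^ 2) := by
            rw [← h9]; exact h7
        _ ≤ (H / 2) ^ (-α) * B := by
            apply mul_le_mul_of_nonneg_left h10 (Real.rpow_nonneg hH2.le _)
    have hD_nonneg : 0 ≤ D := by
      rw [hDdef]
      apply setIntegral_nonneg measurableSet_Ioo
      intro t _; positivity
    -- f H ^ 2 ≤ (2/H) * D + D = (2/H + 1) * D ≤ (2/H+1) (H/2)^(-α) B = K * B
    have h11 : f H ^ 2 ≤ (2 / H + 1) * D := by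
      have hhd : (H / 2) * ((2 / H + 1) * D) = D + (H / 2) * D := by
        field_simp
      have h11' : (H / 2) * f H ^ 2 ≤ (H / 2) * ((2 / H + 1) * D) := by
        rw [hhd]; exact hint1
      exact le_of_mul_le_mul_left h11' hH2
    calc f H ^ 2 ≤ (2 / H + 1) * D := h11
      _ ≤ (2 / H + 1) * ((H / 2) ^ (-α) * B) := by
          apply mul_le_mul_of_nonneg_left hDB (by positivity)
      _ = K * B := by rw [hKdef]; ring
  -- combine everything: A ≤ C * B
  have hkey : A ≤ C * B := by
    have h12 : (α - 1) * A ≤ H ^ (α - 1) * (K * B) + (α - 1) / 2 * A + 2 / (α - 1) * B2 := by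
      have h13 : (α - 1) * A = H ^ (α - 1) * f H ^ 2 - I := by linarith [hsplit]
      have h14 : -I ≤ |I| := neg_le_abs I
      have h15 : H ^ (α - 1) * f H ^ 2 ≤ H ^ (α - 1) * (K * B) :=
        mul_le_mul_of_nonneg_left hbd hPpos.le
      linarith [hIbound]
    have h16 : (α - 1) / 2 * A ≤ (H ^ (α - 1) * K + 2 / (α - 1)) * B := by
      have : 2 / (α - 1) * B2 ≤ 2 / (α - 1) * B :=
        mul_le_mul_of_nonneg_left hB2_le_B (by positivity)
      nlinarith [h12]
    have h17 := mul_le_mul_of_nonneg_left h16 (show (0:ℝ) ≤ 2 / (α - 1) by positivity)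
    have h18 : 2 / (α - 1) * ((α - 1) / 2 * A) = A := by field_simp
    rw [h18] at h17
    calc A ≤ 2 / (α - 1) * ((H ^ (α - 1) * K + 2 / (α - 1)) * B) := h17
      _ = C * B := by rw [hCdef]; ring
  -- convert to lintegrals
  have hA_nn : 0 ≤ᵐ[volume.restrict (Ioo 0 H)] fun y => y ^ (α - 2) * f y ^ 2 := by
    filter_upwards [ae_restrict_mem measurableSet_Ioo] with y hy
    exact mul_nonneg (Real.rpow_nonneg hy.1.le _) (sq_nonneg _)
  rw [hAdef, hBdef] at hkey
  rw [← ofReal_integral_eq_lintegral_ofReal hA_int hA_nn,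
    ← ofReal_integral_eq_lintegral_ofReal hB_int hB_nonneg_ae,
    ← ENNReal.ofReal_mul hCpos.le]
  exact ENNReal.ofReal_le_ofReal hkey
end

section
/- Let V be a real Hilbert space with inner product a, S ⊂ V closed under scalar multiplication, and r ∈ S ∖ {0} a global minimizer over S of v ↦ ‖ψ − v‖²_a for given ψ ∈ V. Then ‖r‖_a = a(ψ, r)/‖r‖_a = sup_{s ∈ S ∖ {0}} a(ψ, s)/‖s‖_a. -/
/-- Best one-term approximation from a scale-invariant dictionary captures the maximal
normalized correlation: if `r ∈ S ∖ {0}` globally minimizes `v ↦ ‖ψ − v‖` over `S`, then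
`‖r‖ = ⟪ψ, r⟫/‖r‖` and `‖r‖` is the greatest value of `s ↦ ⟪ψ, s⟫/‖s‖` over `S ∖ {0}`. -/
theorem best_one_term_approx_sup {V : Type*} [NormedAddCommGroup V]
    [InnerProductSpace ℝ V] [CompleteSpace V]
    (S : Set V) (hSsmul : ∀ (t : ℝ), ∀ s ∈ S, t • s ∈ S)
    (ψ r : V) (hrS : r ∈ S) (hr0 : r ≠ 0)
    (hmin : ∀ s ∈ S, ‖ψ - r‖ ≤ ‖ψ - s‖) :
    ‖r‖ = (inner ℝ ψ r : ℝ) / ‖r‖ ∧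
    IsGreatest ((fun s => (inner ℝ ψ s : ℝ) / ‖s‖) '' (S \ {0})) ‖r‖ := by
  have key : ∀ s ∈ S, s ≠ 0 →
      ‖ψ - r‖ ^ 2 ≤ ‖ψ‖ ^ 2 - ((inner ℝ ψ s : ℝ) / ‖s‖) ^ 2 := by
    intro s hs hs0
    have hns : (0:ℝ) < ‖s‖ := norm_pos_iff.mpr hs0
    set t : ℝ := (inner ℝ ψ s : ℝ) / ‖s‖ ^ 2 with ht
    have hts : t • s ∈ S := hSsmul t s hs
    have h1 : ‖ψ - r‖ ≤ ‖ψ - t • s‖ := hmin _ hts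
    have h2 : ‖ψ - r‖ ^ 2 ≤ ‖ψ - t • s‖ ^ 2 := by
      exact pow_le_pow_left₀ (norm_nonneg _) h1 2
    have h3 : ‖ψ - t • s‖ ^ 2 = ‖ψ‖ ^ 2 - 2 * (inner ℝ ψ (t • s) : ℝ) + ‖t • s‖ ^ 2 :=
      norm_sub_sq_real ψ (t • s)
    have h4 : (inner ℝ ψ (t • s) : ℝ) = t * (inner ℝ ψ s : ℝ) := real_inner_smul_right ψ s t
    have h5 : ‖t • s‖ ^ 2 = t ^ 2 * ‖s‖ ^ 2 := by
      rw [norm_smul]; rw [mul_pow]; simp [sq_abs]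
    have h6 : ‖ψ - t • s‖ ^ 2 = ‖ψ‖ ^ 2 - ((inner ℝ ψ s : ℝ) / ‖s‖) ^ 2 := by
      rw [h3, h4, h5, ht]
      field_simp
      ring
    linarith [h2, h6]
  have hnr : (0:ℝ) < ‖r‖ := norm_pos_iff.mpr hr0
  have hexp : ‖ψ - r‖ ^ 2 = ‖ψ‖ ^ 2 - 2 * (inner ℝ ψ r : ℝ) + ‖r‖ ^ 2 :=
    norm_sub_sq_real ψ r
  have hkr := key r hrS hr0
  have heq : ‖r‖ = (inner ℝ ψ r : ℝ) / ‖r‖ := by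
    have hsq : (‖r‖ - (inner ℝ ψ r : ℝ) / ‖r‖) ^ 2 ≤ 0 := by
      have : ‖r‖ * ((inner ℝ ψ r : ℝ) / ‖r‖) = (inner ℝ ψ r : ℝ) := by
        field_simp
      nlinarith [hkr, hexp]
    have := sq_nonneg (‖r‖ - (inner ℝ ψ r : ℝ) / ‖r‖)
    have : (‖r‖ - (inner ℝ ψ r : ℝ) / ‖r‖) ^ 2 = 0 := le_antisymm hsq this
    have := pow_eq_zero_iff (n := 2) (by norm_num) |>.mp this
    linarith [sub_eq_zero.mp this]
  refine ⟨heq, ⟨⟨r, ⟨hrS, hr0⟩, heq.symm⟩, ?_⟩⟩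
  rintro x ⟨s, ⟨hs, hs0⟩, rfl⟩
  simp only [Set.mem_singleton_iff] at hs0
  have hns : (0:ℝ) < ‖s‖ := norm_pos_iff.mpr hs0
  have hks := key s hs hs0
  -- from heq: ‖ψ - r‖² = ‖ψ‖² - ‖r‖²
  have hrr : ‖ψ - r‖ ^ 2 = ‖ψ‖ ^ 2 - ‖r‖ ^ 2 := by
    have : (inner ℝ ψ r : ℝ) = ‖r‖ ^ 2 := by
      field_simp at heq
      nlinarith [heq]
    rw [hexp, this]; ring
  have hle : ((inner ℝ ψ s : ℝ) / ‖s‖) ^ 2 ≤ ‖r‖ ^ 2 := by linarith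
  simp only []
  nlinarith [hle, hnr]
end

section
/- With H, V, a, (λ_n, e_n) as in the variational spectral theorem (V ⊂⊂ H densely, a symmetric bounded coercive, a(e_n, v) = λ_n⟨e_n, v⟩_H, (e_n) H-orthonormal basis, (e_n/√λ_n) a-orthonormal basis of V), one has for h ∈ H: h ∈ V if and only if Σ_{n} λ_n ⟨h, e_n⟩²_H < ∞. -/
open Filter

/-- Characterization of the form domain by coefficient decay: with `V ⊂⊂ H` densely
(embedding `ι`), `a` symmetric bounded coercive on `V`, and eigenpairs `(λ_n, e_n)` with
`a(e_n, v) = λ_n ⟨e_n, v⟩_H`, `(e_n)` an `H`-orthonormal basis and `(e_n/√λ_n)` an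
`a`-orthonormal basis of `V`, one has for `h ∈ H`:
`h ∈ V` if and only if `Σ_n λ_n ⟨h, e_n⟩²_H < ∞`. -/
theorem mem_form_domain_iff_coef_decay
    {H V : Type*} [NormedAddCommGroup H] [InnerProductSpace ℝ H] [CompleteSpace H]
    [TopologicalSpace.SeparableSpace H]
    [NormedAddCommGroup V] [InnerProductSpace ℝ V] [CompleteSpace V]
    [TopologicalSpace.SeparableSpace V]
    (ι : V →L[ℝ] H) (hinj : Function.Injective ι) (hdense : DenseRange ι)
    (hcompact : IsCompactOperator ι)
    (a : V → V → ℝ)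
    (haddl : ∀ u v w : V, a (u + v) w = a u w + a v w)
    (hsmull : ∀ (t : ℝ) (u v : V), a (t • u) v = t * a u v)
    (hsymm : ∀ u v : V, a u v = a v u)
    (hbdd : ∃ Cb : ℝ, ∀ u v : V, |a u v| ≤ Cb * ‖u‖ * ‖v‖)
    (hell : ∃ c : ℝ, 0 < c ∧ ∀ u : V, c * ‖u‖ ^ 2 ≤ a u u)
    (lam : ℕ → ℝ) (e : ℕ → V)
    (heig : ∀ n : ℕ, ∀ v : V, a (e n) v = lam n * (inner ℝ (ι (e n)) (ι v) : ℝ))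
    (hpos : ∀ n, 0 < lam n)
    (horthH : Orthonormal ℝ (fun n => ι (e n)))
    (hbasisH : Dense ((Submodule.span ℝ (Set.range fun n => ι (e n)) : Submodule ℝ H) : Set H))
    (hortha : ∀ n m : ℕ,
      a ((Real.sqrt (lam n))⁻¹ • e n) ((Real.sqrt (lam m))⁻¹ • e m)
        = if n = m then 1 else 0)
    (hbasisV : Dense ((Submodule.span ℝ (Set.range e) : Submodule ℝ V) : Set V)) :
    ∀ h : H, (h ∈ Set.range ι ↔ Summable (fun n => lam n * (inner ℝ h (ι (e n)) : ℝ) ^ 2)) := by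
  classical
  obtain ⟨c, hc, hcoer⟩ := hell
  have haddr : ∀ u v w : V, a u (v + w) = a u v + a u w := by
    intro u v w; rw [hsymm, haddl, hsymm v u, hsymm w u]
  have hsmulr : ∀ (t : ℝ) (u v : V), a u (t • v) = t * a u v := by
    intro t u v; rw [hsymm, hsmull, hsymm]
  set B : V →ₗ[ℝ] V →ₗ[ℝ] ℝ := LinearMap.mk₂ ℝ a haddl hsmull haddr hsmulr with hB
  have hBa : ∀ u v : V, B u v = a u v := fun u v => rfl
  have hee : ∀ n m : ℕ, a (e n) (e m) = if n = m then lam n else 0 := by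
    intro n m
    rw [heig, orthonormal_iff_ite.mp horthH n m]
    by_cases hnm : n = m <;> simp [hnm]
  have expand : ∀ (s : Finset ℕ) (f g : ℕ → ℝ),
      a (∑ n ∈ s, f n • e n) (∑ m ∈ s, g m • e m)
        = ∑ n ∈ s, ∑ m ∈ s, f n * g m * a (e n) (e m) := by
    intro s f g
    rw [← hBa]
    simp only [map_sum, map_smul, LinearMap.coe_sum, Finset.sum_apply,
      LinearMap.smul_apply, smul_eq_mul, Finset.mul_sum]
    rw [Finset.sum_comm]
    exact Finset.sum_congr rfl fun n _ => Finset.sum_congr rfl fun m _ => by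
      rw [hBa]; ring
  have diag : ∀ (s : Finset ℕ) (f : ℕ → ℝ),
      a (∑ n ∈ s, f n • e n) (∑ n ∈ s, f n • e n) = ∑ n ∈ s, lam n * (f n) ^ 2 := by
    intro s f
    rw [expand]
    refine Finset.sum_congr rfl fun n hn => ?_
    rw [Finset.sum_eq_single n]
    · rw [hee]; simp; ring
    · intro m _ hmn; rw [hee]; simp [Ne.symm hmn]
    · intro h; exact absurd hn h
  have cross : ∀ (s : Finset ℕ) (f : ℕ → ℝ) (v : V),
      a v (∑ n ∈ s, f n • e n) = ∑ n ∈ s, f n * a (e n) v := by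
    intro s f v
    rw [← hBa, map_sum]
    refine Finset.sum_congr rfl fun n _ => ?_
    rw [LinearMap.map_smul]
    simp [hBa, smul_eq_mul, hsymm v (e n)]
  have hsub : ∀ u w : V, a (u - w) (u - w) = a u u - 2 * a u w + a w w := by
    intro u w
    have h1 : B (u - w) (u - w) = B u u - B u w - (B w u - B w w) := by
      simp only [map_sub, LinearMap.sub_apply]
      ring
    rw [← hBa, h1, hBa, hBa, hBa, hBa, hsymm w u]; ring
  have hsp : ⊤ ≤ (Submodule.span ℝ (Set.range fun n => ι (e n))).topologicalClosure :=
    (Submodule.dense_iff_topologicalClosure_eq_top.mp hbasisH).ge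
  set b : HilbertBasis ℕ ℝ H := HilbertBasis.mk horthH hsp with hbdef
  have hbcoe : ∀ n, b n = ι (e n) := fun n => by
    rw [hbdef, HilbertBasis.coe_mk]
  intro h
  constructor
  · rintro ⟨v, rfl⟩
    set f : ℕ → ℝ := fun n => (inner ℝ (ι v) (ι (e n)) : ℝ) with hf
    have key : ∀ n, a (e n) v = lam n * f n := by
      intro n; rw [heig, hf, real_inner_comm]
    refine summable_of_sum_range_le (c := a v v)
      (fun n => mul_nonneg (hpos n).le (sq_nonneg _)) (fun N => ?_)
    set S := ∑ n ∈ Finset.range N, f n • e n with hS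
    have h1 : a v S = ∑ n ∈ Finset.range N, lam n * (f n) ^ 2 := by
      rw [hS, cross]
      refine Finset.sum_congr rfl fun n _ => ?_
      rw [key]; ring
    have h2 : a S S = ∑ n ∈ Finset.range N, lam n * (f n) ^ 2 := diag _ _
    have hexp : a (v - S) (v - S) = a v v - ∑ n ∈ Finset.range N, lam n * (f n) ^ 2 := by
      rw [hsub, h1, h2]; ring
    have hnn : 0 ≤ a (v - S) (v - S) :=
      le_trans (mul_nonneg hc.le (sq_nonneg _)) (hcoer (v - S))
    rw [hexp] at hnn
    linarith
  · intro hsum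
    set f : ℕ → ℝ := fun n => (inner ℝ h (ι (e n)) : ℝ) with hf
    have hsummV : Summable (fun n => f n • e n) := by
      rw [summable_iff_vanishing_norm]
      intro ε hε
      have hε' : 0 < c * ε ^ 2 := by positivity
      obtain ⟨s, hs⟩ := summable_iff_vanishing_norm.mp hsum (c * ε ^ 2) hε'
      refine ⟨s, fun t ht => ?_⟩
      have hkey : c * ‖∑ n ∈ t, f n • e n‖ ^ 2 ≤ ∑ n ∈ t, lam n * (f n) ^ 2 :=
        le_trans (hcoer _) (le_of_eq (diag _ _))
      have hlt : ∑ n ∈ t, lam n * (f n) ^ 2 < c * ε ^ 2 :=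
        lt_of_le_of_lt (le_abs_self _) (hs t ht)
      have h2 : ‖∑ n ∈ t, f n • e n‖ ^ 2 < ε ^ 2 := by nlinarith
      exact lt_of_pow_lt_pow_left₀ 2 hε.le h2
    obtain ⟨v, hv⟩ := hsummV
    refine ⟨v, ?_⟩
    have hιv : HasSum (fun n => f n • ι (e n)) (ι v) := by
      have := hv.mapL ι
      simpa using this
    have hbs : HasSum (fun n => f n • ι (e n)) h := by
      have hh := b.hasSum_repr h
      have hrepr : ∀ n, b.repr h n = f n := by
        intro n
        rw [b.repr_apply_apply, hbcoe, hf, real_inner_comm]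
      simpa [hrepr, hbcoe] using hh
    exact hιv.unique hbs
end

section
/- Let H > 0, α > 1, γ > 0, and let z : P × (0,H) → ℝ (P ⊂ ℝ^{d−1} a bounded domain) satisfy ∂_d z, ∂_{d,d} z ∈ L²_{w}(P × (0,H)) where w(p′, p_d) = p_d^α. Then there is a constant C (depending on H, α) such that for every p_d ∈ (0,H), ∫_P p_d^α |∂_d z(p′, p_d)|² dp′ ≤ C (‖∂_d z‖²_{L²_w} + ‖∂_{d,d} z‖²_{L²_w}), and consequently ∫_P |∂_d z(p′,p_d)| p_d^α dp′ → 0 as p_d → 0⁺. -/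
open MeasureTheory Set Filter
open scoped ENNReal

namespace WTI

noncomputable def dq (g : ℝ → ℝ) (t : ℝ) : ℝ :=
  Filter.liminf (fun n : ℕ => (g (t + 1/((n:ℝ)+1)) - g t) * ((n:ℝ)+1)) atTop

lemma tendsto_seq (t : ℝ) :
    Tendsto (fun n : ℕ => t + 1/((n:ℝ)+1)) atTop (nhdsWithin t (Ioi t)) := by
  apply tendsto_nhdsWithin_of_tendsto_nhds_of_eventually_within
  · have : Tendsto (fun n : ℕ => 1/((n:ℝ)+1)) atTop (nhds 0) :=
      tendsto_one_div_add_atTop_nhds_zero_nat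
    simpa using tendsto_const_nhds.add this
  · filter_upwards with n
    have : (0:ℝ) < 1/((n:ℝ)+1) := by positivity
    simp [mem_Ioi]; linarith

lemma dq_eq {g : ℝ → ℝ} {c t : ℝ} (h : HasDerivAt g c t) : dq g t = c := by
  have hs : Tendsto (fun n : ℕ => t + 1/((n:ℝ)+1)) atTop (nhdsWithin t {t}ᶜ) := by
    apply (tendsto_seq t).mono_right
    apply nhdsWithin_mono
    intro x hx
    exact ne_of_gt hx
  have hslope := (hasDerivAt_iff_tendsto_slope.1 h).comp hs
  have hx : ∀ n : ℕ, t + 1/((n:ℝ)+1) - t = 1/((n:ℝ)+1) := fun n => by ring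
  have hslope' : Tendsto (fun n : ℕ => (g (t + 1/((n:ℝ)+1)) - g t) * ((n:ℝ)+1))
      atTop (nhds c) := by
    apply hslope.congr
    intro n
    rw [Function.comp_apply, slope_def_field, hx n]; rw [div_div_eq_mul_div, div_one]
  exact hslope'.liminf_eq

lemma dq_congr {g h : ℝ → ℝ} {t : ℝ} (heq : ∀ᶠ s in nhdsWithin t (Ioi t), g s = h s)
    (ht : g t = h t) : dq g t = dq h t := by
  apply Filter.liminf_congr
  filter_upwards [(tendsto_seq t).eventually heq] with n hn
  rw [hn, ht]

variable {k : ℕ}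

noncomputable def D (w : (Fin k → ℝ) × ℝ → ℝ) : (Fin k → ℝ) × ℝ → ℝ :=
  fun p => dq (fun s => w (p.1, s)) p.2

lemma measurable_D {w : (Fin k → ℝ) × ℝ → ℝ} (hw : Measurable w) : Measurable (D w) := by
  have : D w = fun p => Filter.liminf
      (fun n : ℕ => (w (p.1, p.2 + 1/((n:ℝ)+1)) - w p) * ((n:ℝ)+1)) atTop := rfl
  rw [this]
  apply Measurable.liminf
  intro n
  exact ((hw.comp (measurable_fst.prodMk (measurable_snd.add_const _))).sub hw).mul_const _

lemma D_eq {w : (Fin k → ℝ) × ℝ → ℝ} {p : (Fin k → ℝ) × ℝ} {c : ℝ}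
    (h : HasDerivAt (fun s => w (p.1, s)) c p.2) : D w p = c := dq_eq h

end WTI

namespace WTI2

set_option maxHeartbeats 1000000 in
lemma oneD {H α : ℝ} (hH : 0 < H) (hα : 1 < α) :
    ∃ C : ℝ, 0 < C ∧ ∀ f : ℝ → ℝ, ContDiffOn ℝ 1 f (Ioo 0 H) → ∀ t ∈ Ioo 0 H,
      ENNReal.ofReal (t ^ α * f t ^ 2)
        ≤ ENNReal.ofReal C *
          ((∫⁻ s in Ioo 0 H, ENNReal.ofReal (s ^ α * f s ^ 2)) +
           (∫⁻ s in Ioo 0 H, ENNReal.ofReal (s ^ α * deriv f s ^ 2))) := by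
  have hα1 : (0:ℝ) < α - 1 := by linarith
  have hα0 : (0:ℝ) ≤ α := by linarith
  set c1 : ℝ := 2 * H ^ α * (2/H) ^ α with hc1def
  set c2 : ℝ := 2 * (H * 2 ^ (α - 1)) / (α - 1) with hc2def
  have hc1pos : 0 < c1 := by positivity
  have hc2pos : 0 < c2 := div_pos (by positivity) hα1
  set C : ℝ := c1 * (2/H) + c2 with hCdef
  have hCpos : 0 < C := by positivity
  refine ⟨C, hCpos, ?_⟩
  intro f hf t ht
  set J := ∫⁻ s in Ioo 0 H, ENNReal.ofReal (s ^ α * f s ^ 2) with hJdef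
  set K := ∫⁻ s in Ioo 0 H, ENNReal.ofReal (s ^ α * deriv f s ^ 2) with hKdef
  have hfd : DifferentiableOn ℝ f (Ioo 0 H) := hf.differentiableOn one_ne_zero
  have hfc : ContinuousOn (deriv f) (Ioo 0 H) :=
    hf.continuousOn_deriv_of_isOpen isOpen_Ioo le_rfl
  have hHA : ∀ x ∈ Ioo 0 H, HasDerivAt f (deriv f x) x := fun x hx =>
    (hfd.differentiableAt (isOpen_Ioo.mem_nhds hx)).hasDerivAt
  -- Step 1
  have step1 : ∀ s ∈ Ioo (H/2) H,
      ENNReal.ofReal (t ^ α * f t ^ 2)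
        ≤ ENNReal.ofReal c1 * ENNReal.ofReal (s ^ α * f s ^ 2) + ENNReal.ofReal c2 * K := by
    intro s hs
    have hs' : s ∈ Ioo 0 H := ⟨lt_trans (half_pos hH) hs.1, hs.2⟩
    set m : ℝ := min t s with hmdef
    set M : ℝ := max t s with hMdef
    have hm0 : 0 < m := lt_min ht.1 hs'.1
    have hMH : M < H := max_lt ht.2 hs.2
    have hmM : m ≤ M := min_le_max
    have hIccsub : Icc m M ⊆ Ioo 0 H := fun x hx =>
      ⟨lt_of_lt_of_le hm0 hx.1, lt_of_le_of_lt hx.2 hMH⟩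
    have hIocsub : Ioc m M ⊆ Ioo 0 H := fun x hx => hIccsub ⟨hx.1.le, hx.2⟩
    have hsub : uIcc t s ⊆ Ioo 0 H := by
      rw [uIcc]; exact hIccsub
    -- FTC
    have hFTC : ∫ r in t..s, deriv f r = f s - f t :=
      intervalIntegral.integral_deriv_eq_sub (fun x hx => hfd.differentiableAt (isOpen_Ioo.mem_nhds (hsub hx)))
        ((hfc.mono hsub).intervalIntegrable)
    set D : ℝ := ∫ r in Ioc m M, |deriv f r| with hDdef
    have hcontd : ContinuousOn (deriv f) (Icc m M) := hfc.mono hIccsub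
    have hint : IntegrableOn (fun r => |deriv f r|) (Ioc m M) :=
      (hcontd.abs.integrableOn_Icc).mono_set Ioc_subset_Icc_self
    have hD0 : 0 ≤ D := setIntegral_nonneg measurableSet_Ioc (fun r _ => abs_nonneg _)
    have habs : |f t| ≤ |f s| + D := by
      have hmm : |∫ r in m..M, deriv f r| ≤ D := by
        calc |∫ r in m..M, deriv f r| ≤ ∫ r in m..M, |deriv f r| :=
              intervalIntegral.abs_integral_le_integral_abs hmM
          _ = D := intervalIntegral.integral_of_le hmM
      have hts : |∫ r in t..s, deriv f r| = |∫ r in m..M, deriv f r| := by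
        rcases le_total t s with h' | h'
        · rw [hmdef, hMdef, min_eq_left h', max_eq_right h']
        · rw [intervalIntegral.integral_symm, abs_neg, hmdef, hMdef, min_eq_right h',
            max_eq_left h']
      have h3 : |f t| - |f s| ≤ |f t - f s| := abs_sub_abs_le_abs_sub _ _
      have h4 : |f t - f s| = |∫ r in t..s, deriv f r| := by rw [hFTC, abs_sub_comm]
      rw [h4, hts] at h3
      linarith
    -- pointwise square bound
    have hsq : t ^ α * f t ^ 2 ≤ 2 * t ^ α * f s ^ 2 + 2 * t ^ α * D ^ 2 := by
      have htα : (0:ℝ) ≤ t ^ α := Real.rpow_nonneg ht.1.le α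
      have h5 : f t ^ 2 ≤ 2 * f s ^ 2 + 2 * D ^ 2 := by
        nlinarith [sq_abs (f t), sq_abs (f s), sq_nonneg (|f s| - D),
          mul_self_le_mul_self (abs_nonneg (f t)) habs]
      nlinarith [mul_le_mul_of_nonneg_left h5 htα]
    -- first term bound
    have hterm1 : 2 * t ^ α * f s ^ 2 ≤ c1 * (s ^ α * f s ^ 2) := by
      have ht2 : t ^ α ≤ H ^ α := Real.rpow_le_rpow ht.1.le ht.2.le hα0
      have hs1 : (1:ℝ) ≤ (2/H) ^ α * s ^ α := by
        rw [← Real.mul_rpow (by positivity) hs'.1.le]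
        apply Real.one_le_rpow _ hα0
        rw [div_mul_eq_mul_div, le_div_iff₀ hH]
        linarith [hs.1]
      have hfs2 : (0:ℝ) ≤ f s ^ 2 := sq_nonneg _
      calc 2 * t ^ α * f s ^ 2 ≤ 2 * H ^ α * f s ^ 2 := by nlinarith
        _ = 2 * H ^ α * f s ^ 2 * 1 := by ring
        _ ≤ 2 * H ^ α * f s ^ 2 * ((2/H) ^ α * s ^ α) := by
            apply mul_le_mul_of_nonneg_left hs1 (by positivity)
        _ = c1 * (s ^ α * f s ^ 2) := by rw [hc1def]; ring
    -- Cauchy-Schwarz term bound : ofReal (2 t^α D^2) ≤ ofReal c2 * K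
    have hCS : ENNReal.ofReal (2 * t ^ α * D ^ 2) ≤ ENNReal.ofReal c2 * K := by
      have hg2cont : ContinuousOn (fun r => r ^ (α/2) * |deriv f r|) (Icc m M) := by
        apply ContinuousOn.mul _ hcontd.abs
        exact continuousOn_id.rpow_const (fun x hx => Or.inr (by positivity))
      have hDlint : ENNReal.ofReal D = ∫⁻ r in Ioc m M, ENNReal.ofReal |deriv f r| :=
        ofReal_integral_eq_lintegral_ofReal hint (ae_of_all _ fun r => abs_nonneg _)
      -- factor the integrand
      have hfac : ∀ r ∈ Ioc m M, ENNReal.ofReal |deriv f r|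
          = (ENNReal.ofReal (r ^ (-(α/2))) * ENNReal.ofReal (r ^ (α/2) * |deriv f r|)) := by
        intro r hr
        have hr0 : 0 < r := lt_trans hm0 hr.1
        rw [← ENNReal.ofReal_mul (Real.rpow_nonneg hr0.le _)]
        congr 1
        rw [← mul_assoc, ← Real.rpow_add hr0]
        norm_num
      have hfaceq : (∫⁻ r in Ioc m M, ENNReal.ofReal |deriv f r|)
          = ∫⁻ r in Ioc m M,
              (fun r => ENNReal.ofReal (r ^ (-(α/2)))) r
                * (fun r => ENNReal.ofReal (r ^ (α/2) * |deriv f r|)) r :=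
        setLIntegral_congr_fun measurableSet_Ioc hfac
      have hg1meas : AEMeasurable (fun r => ENNReal.ofReal (r ^ (-(α/2))))
          (volume.restrict (Ioc m M)) := by
        apply AEMeasurable.ennreal_ofReal
        apply ContinuousOn.aemeasurable _ measurableSet_Ioc
        exact continuousOn_id.rpow_const
          (fun x hx => Or.inl (ne_of_gt (lt_trans hm0 hx.1)))
      have hg2meas : AEMeasurable (fun r => ENNReal.ofReal (r ^ (α/2) * |deriv f r|))
          (volume.restrict (Ioc m M)) := by
        apply AEMeasurable.ennreal_ofReal
        exact ((hg2cont.mono Ioc_subset_Icc_self).aemeasurable measurableSet_Ioc)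
      have hHolder := ENNReal.lintegral_mul_le_Lp_mul_Lq (volume.restrict (Ioc m M))
        (show Real.HolderConjugate 2 2 by constructor <;> norm_num) hg1meas hg2meas
      set A := ∫⁻ r in Ioc m M, ENNReal.ofReal (r ^ (-(α/2))) ^ (2:ℝ) with hAdef
      set B := ∫⁻ r in Ioc m M, ENNReal.ofReal (r ^ (α/2) * |deriv f r|) ^ (2:ℝ) with hBdef
      have hDle : ENNReal.ofReal D ≤ A ^ ((1:ℝ)/2) * B ^ ((1:ℝ)/2) := by
        rw [hDlint, hfaceq]
        exact hHolder
      have hDsq : (ENNReal.ofReal D) ^ (2:ℕ) ≤ A * B := by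
        calc (ENNReal.ofReal D) ^ (2:ℕ) ≤ (A ^ ((1:ℝ)/2) * B ^ ((1:ℝ)/2)) ^ (2:ℕ) :=
              pow_le_pow_left' hDle 2
          _ = A * B := by
              rw [mul_pow, ← ENNReal.rpow_natCast (A ^ _), ← ENNReal.rpow_natCast (B ^ _),
                ← ENNReal.rpow_mul, ← ENNReal.rpow_mul]
              norm_num
      -- evaluate A
      have hAeq : A = ∫⁻ r in Ioc m M, ENNReal.ofReal (r ^ (-α)) := by
        rw [hAdef]
        apply setLIntegral_congr_fun measurableSet_Ioc ?_
        intro r hr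
        have hr0 : 0 < r := lt_trans hm0 hr.1
        beta_reduce
        rw [ENNReal.ofReal_rpow_of_nonneg (Real.rpow_nonneg hr0.le _)
          (by norm_num : (0:ℝ) ≤ 2)]
        congr 1
        rw [← Real.rpow_mul hr0.le, show -(α/2) * 2 = -α by ring]
      have hAint : IntegrableOn (fun r => r ^ (-α)) (Ioc m M) := by
        exact ((continuousOn_id.rpow_const
          (fun x hx => Or.inl (ne_of_gt (lt_of_lt_of_le hm0 hx.1)))).integrableOn_Icc).mono_set
          Ioc_subset_Icc_self
      have hAval : ∫ r in Ioc m M, r ^ (-α) ≤ m ^ (1 - α) / (α - 1) := by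
        rw [← intervalIntegral.integral_of_le hmM,
          integral_rpow (Or.inr ⟨by linarith, fun h => (hIccsub (by
            rwa [uIcc_of_le hmM] at h)).1.false⟩)]
        have he : -α + 1 = 1 - α := by ring
        rw [he]
        have hM0 : (0:ℝ) ≤ M ^ (1 - α) := Real.rpow_nonneg (le_trans hm0.le hmM) _
        have hne : (1:ℝ) - α ≠ 0 := by linarith
        have heq : (M ^ (1-α) - m ^ (1-α)) / (1 - α) = (m ^ (1-α) - M ^ (1-α)) / (α - 1) := by
          field_simp
          ring
        rw [heq]
        exact (div_le_div_iff_of_pos_right hα1).mpr (by linarith)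
      have hA : A ≤ ENNReal.ofReal (m ^ (1 - α) / (α - 1)) := by
        rw [hAeq, ← ofReal_integral_eq_lintegral_ofReal hAint
          (ae_restrict_of_forall_mem measurableSet_Ioc
            (fun r hr => Real.rpow_nonneg (lt_trans hm0 hr.1).le _))]
        exact ENNReal.ofReal_le_ofReal hAval
      -- evaluate B
      have hBeq : B = ∫⁻ r in Ioc m M, ENNReal.ofReal (r ^ α * deriv f r ^ 2) := by
        rw [hBdef]
        apply setLIntegral_congr_fun measurableSet_Ioc ?_
        intro r hr
        have hr0 : 0 < r := lt_trans hm0 hr.1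
        beta_reduce
        rw [ENNReal.ofReal_rpow_of_nonneg (by positivity) (by norm_num : (0:ℝ) ≤ 2)]
        congr 1
        rw [Real.mul_rpow (Real.rpow_nonneg hr0.le _) (abs_nonneg _),
          ← Real.rpow_mul hr0.le, show α/2 * 2 = α by ring,
          show ((2:ℝ)) = ((2:ℕ):ℝ) by norm_num, Real.rpow_natCast, sq_abs]
      have hB : B ≤ K := by
        rw [hBeq, hKdef]
        exact lintegral_mono_set hIocsub
      -- coefficient
      have hkey : t ^ α * m ^ (1 - α) ≤ H * 2 ^ (α - 1) := by
        have h2one : (1:ℝ) ≤ 2 ^ (α - 1) := Real.one_le_rpow (by norm_num) (by linarith)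
        rcases le_total t s with h' | h'
        · have hmt : m = t := min_eq_left h'
          rw [hmt, ← Real.rpow_add ht.1]
          have : α + (1 - α) = 1 := by ring
          rw [this, Real.rpow_one]
          nlinarith [ht.2.le, hH]
        · have hms : m = s := min_eq_right h'
          have ht2 : t ^ α ≤ H ^ α := Real.rpow_le_rpow ht.1.le ht.2.le hα0
          have hs2 : s ^ (1 - α) ≤ (H/2) ^ (1 - α) :=
            Real.rpow_le_rpow_of_nonpos (half_pos hH) hs.1.le (by linarith)
          have hprod : H ^ α * (H/2) ^ (1 - α) = H * 2 ^ (α - 1) := by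
            rw [Real.div_rpow hH.le (by norm_num : (0:ℝ) ≤ 2)]
            rw [div_eq_mul_inv, ← Real.rpow_neg (by norm_num : (0:ℝ) ≤ 2)]
            have h1 : -(1 - α) = α - 1 := by ring
            rw [h1, ← mul_assoc, ← Real.rpow_add hH]
            have h2 : α + (1 - α) = 1 := by ring
            rw [h2, Real.rpow_one]
          rw [hms]
          calc t ^ α * s ^ (1 - α) ≤ H ^ α * (H/2) ^ (1 - α) := by
                apply mul_le_mul ht2 hs2 (Real.rpow_nonneg hs'.1.le _)
                  (Real.rpow_nonneg hH.le _)
            _ = H * 2 ^ (α - 1) := hprod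
      have hcoef : 2 * t ^ α * (m ^ (1 - α) / (α - 1)) ≤ c2 := by
        rw [hc2def, show 2 * t ^ α * (m ^ (1-α) / (α-1)) = 2 * (t ^ α * m ^ (1-α)) / (α-1)
          by ring]
        exact (div_le_div_iff_of_pos_right hα1).mpr (by linarith)
      -- assemble
      calc ENNReal.ofReal (2 * t ^ α * D ^ 2)
          = ENNReal.ofReal (2 * t ^ α) * (ENNReal.ofReal D) ^ (2:ℕ) := by
            rw [← ENNReal.ofReal_pow hD0, ← ENNReal.ofReal_mul (mul_nonneg (by norm_num) (Real.rpow_nonneg ht.1.le α))]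
        _ ≤ ENNReal.ofReal (2 * t ^ α) * (A * B) := by
            exact mul_le_mul_right hDsq _
        _ ≤ ENNReal.ofReal (2 * t ^ α) * (ENNReal.ofReal (m ^ (1 - α) / (α - 1)) * K) := by
            exact mul_le_mul_right (mul_le_mul' hA hB) _
        _ = ENNReal.ofReal (2 * t ^ α * (m ^ (1 - α) / (α - 1))) * K := by
            rw [← mul_assoc, ← ENNReal.ofReal_mul (mul_nonneg (by norm_num) (Real.rpow_nonneg ht.1.le α))]
        _ ≤ ENNReal.ofReal c2 * K := mul_le_mul_left (ENNReal.ofReal_le_ofReal hcoef) _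
    -- assemble step1
    calc ENNReal.ofReal (t ^ α * f t ^ 2)
        ≤ ENNReal.ofReal (c1 * (s ^ α * f s ^ 2) + 2 * t ^ α * D ^ 2) := by
          apply ENNReal.ofReal_le_ofReal
          linarith
      _ ≤ ENNReal.ofReal (c1 * (s ^ α * f s ^ 2)) + ENNReal.ofReal (2 * t ^ α * D ^ 2) :=
          ENNReal.ofReal_add_le
      _ ≤ ENNReal.ofReal c1 * ENNReal.ofReal (s ^ α * f s ^ 2) + ENNReal.ofReal c2 * K := by
          rw [ENNReal.ofReal_mul hc1pos.le]
          exact add_le_add_right hCS _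
  -- Step 2 : average over s in Ioo (H/2) H
  have hsub2 : Ioo (H/2) H ⊆ Ioo 0 H := fun x hx => ⟨lt_trans (half_pos hH) hx.1, hx.2⟩
  have hJKmeas : AEMeasurable (fun s => ENNReal.ofReal (s ^ α * f s ^ 2))
      (volume.restrict (Ioo (H/2) H)) := by
    apply AEMeasurable.ennreal_ofReal
    apply ContinuousOn.aemeasurable _ measurableSet_Ioo
    apply ContinuousOn.mul
    · exact continuousOn_id.rpow_const
        (fun x hx => Or.inl (ne_of_gt (lt_trans (half_pos hH) hx.1)))
    · exact (hf.continuousOn.mono hsub2).pow 2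
  set W := ENNReal.ofReal (H/2) with hWdef
  have hW0 : W ≠ 0 := by
    simp only [hWdef, ne_eq, ENNReal.ofReal_eq_zero, not_le]
    positivity
  have hWtop : W ≠ ⊤ := ENNReal.ofReal_ne_top
  have e1 : ENNReal.ofReal c1 ≤ ENNReal.ofReal C * W := by
    rw [hWdef, ← ENNReal.ofReal_mul hCpos.le]
    apply ENNReal.ofReal_le_ofReal
    have hCH : C * (H/2) = c1 + c2 * (H/2) := by
      rw [hCdef]
      field_simp
    nlinarith [mul_pos hc2pos (half_pos hH)]
  have e2 : ENNReal.ofReal c2 ≤ ENNReal.ofReal C := by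
    apply ENNReal.ofReal_le_ofReal
    rw [hCdef]
    nlinarith [mul_pos hc1pos (by positivity : (0:ℝ) < 2/H)]
  have key : ENNReal.ofReal (t ^ α * f t ^ 2) * W ≤ (ENNReal.ofReal C * (J + K)) * W := by
    calc ENNReal.ofReal (t ^ α * f t ^ 2) * W
        = ∫⁻ _ in Ioo (H/2) H, ENNReal.ofReal (t ^ α * f t ^ 2) := by
          rw [setLIntegral_const, Real.volume_Ioo, show H - H/2 = H/2 by ring]
      _ ≤ ∫⁻ s in Ioo (H/2) H,
            (ENNReal.ofReal c1 * ENNReal.ofReal (s ^ α * f s ^ 2) + ENNReal.ofReal c2 * K) :=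
          setLIntegral_mono' measurableSet_Ioo step1
      _ = ENNReal.ofReal c1 * (∫⁻ s in Ioo (H/2) H, ENNReal.ofReal (s ^ α * f s ^ 2))
            + (ENNReal.ofReal c2 * K) * W := by
          rw [lintegral_add_left' (hJKmeas.const_mul _),
            lintegral_const_mul' _ _ ENNReal.ofReal_ne_top, setLIntegral_const,
            Real.volume_Ioo, show H - H/2 = H/2 by ring, hWdef]
      _ ≤ ENNReal.ofReal c1 * J + (ENNReal.ofReal c2 * K) * W := by
          gcongr
          exact lintegral_mono_set hsub2
      _ ≤ (ENNReal.ofReal C * W) * J + ((ENNReal.ofReal C * K) * W) :=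
          add_le_add (mul_le_mul_left e1 J)
            (mul_le_mul_left (mul_le_mul_left e2 K) W)
      _ = (ENNReal.ofReal C * (J + K)) * W := by ring
  exact (ENNReal.mul_le_mul_iff_left hW0 hWtop).mp key

end WTI2


set_option maxHeartbeats 1000000 in
/-- Trace-type inequality on a half-cylinder `P × (0,H)` with power weight
`w(p′, p_d) = p_d^α`, `α > 1`: if `∂_d z` and `∂_{d,d} z` lie in `L²_w(P × (0,H))`, then
there is a constant `C` (depending only on `H` and `α`) with
`∫_P p_d^α |∂_d z(p′, p_d)|² dp′ ≤ C (‖∂_d z‖²_{L²_w} + ‖∂_{d,d} z‖²_{L²_w})`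
for every `p_d ∈ (0,H)`; consequently `∫_P |∂_d z(p′,p_d)| p_d^α dp′ → 0` as `p_d → 0⁺`. -/
theorem weighted_trace_inequality (k : ℕ) (H α γ : ℝ) (hH : 0 < H) (hα : 1 < α)
    (hγ : 0 < γ) :
    ∃ C : ℝ, 0 < C ∧
      ∀ (P : Set (Fin k → ℝ)), IsOpen P → Bornology.IsBounded P →
      ∀ z : (Fin k → ℝ) × ℝ → ℝ, Measurable z →
      (∀ p' ∈ P, ContDiffOn ℝ 2 (fun t => z (p', t)) (Ioo 0 H)) →
      IntegrableOn (fun x => (deriv (fun t => z (x.1, t)) x.2) ^ 2 * x.2 ^ α)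
        (P ×ˢ Ioo 0 H) →
      IntegrableOn (fun x => (deriv (deriv (fun t => z (x.1, t))) x.2) ^ 2 * x.2 ^ α)
        (P ×ˢ Ioo 0 H) →
      ((∀ t ∈ Ioo 0 H,
          ∫⁻ p' in P, ENNReal.ofReal (t ^ α * (deriv (fun s => z (p', s)) t) ^ 2)
            ≤ ENNReal.ofReal (C *
                ((∫ x in P ×ˢ Ioo 0 H, (deriv (fun s => z (x.1, s)) x.2) ^ 2 * x.2 ^ α)
                  + ∫ x in P ×ˢ Ioo 0 H,
                      (deriv (deriv (fun s => z (x.1, s))) x.2) ^ 2 * x.2 ^ α))) ∧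
        Tendsto (fun t : ℝ => ∫ p' in P, |deriv (fun s => z (p', s)) t| * t ^ α)
          (nhdsWithin 0 (Ioi 0)) (nhds 0)) := by
  obtain ⟨C, hCpos, h1D⟩ := WTI2.oneD hH hα
  refine ⟨C, hCpos, ?_⟩
  intro P hPo hPb z hz hz2 hI1 hI2
  have hPm : MeasurableSet P := hPo.measurableSet
  have hSm : MeasurableSet (P ×ˢ Ioo (0:ℝ) H) := hPm.prod measurableSet_Ioo
  set d1 := WTI.D z with hd1def
  set d2 := WTI.D d1 with hd2def
  have hd1m : Measurable d1 := WTI.measurable_D hz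
  have hd2m : Measurable d2 := WTI.measurable_D hd1m
  have hfC1 : ∀ p' ∈ P, ContDiffOn ℝ 1 (deriv (fun s => z (p', s))) (Ioo 0 H) := by
    intro p' hp
    exact (hz2 p' hp).deriv_of_isOpen isOpen_Ioo (by norm_num)
  have hd1eq : ∀ p' ∈ P, ∀ t ∈ Ioo (0:ℝ) H, d1 (p', t) = deriv (fun s => z (p', s)) t := by
    intro p' hp t ht
    exact WTI.D_eq ((((hz2 p' hp).differentiableOn (by norm_num)).differentiableAt
      (isOpen_Ioo.mem_nhds ht)).hasDerivAt)
  have hd2eq : ∀ p' ∈ P, ∀ t ∈ Ioo (0:ℝ) H,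
      d2 (p', t) = deriv (deriv (fun s => z (p', s))) t := by
    intro p' hp t ht
    have hf' := hfC1 p' hp
    have hstep : WTI.dq (fun s => d1 (p', s)) t
        = WTI.dq (deriv (fun s => z (p', s))) t := by
      apply WTI.dq_congr
      · filter_upwards [Ioo_mem_nhdsGT ht.2] with s hs
        exact hd1eq p' hp s ⟨lt_trans ht.1 hs.1, hs.2⟩
      · exact hd1eq p' hp t ht
    have : d2 (p', t) = WTI.dq (fun s => d1 (p', s)) t := rfl
    rw [this, hstep]
    exact WTI.dq_eq (((hf'.differentiableOn one_ne_zero).differentiableAt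
      (isOpen_Ioo.mem_nhds ht)).hasDerivAt)
  -- globally measurable versions of the integrands
  set G1 : (Fin k → ℝ) × ℝ → ℝ≥0∞ := fun x => ENNReal.ofReal (|x.2| ^ α * d1 x ^ 2) with hG1
  set G2 : (Fin k → ℝ) × ℝ → ℝ≥0∞ := fun x => ENNReal.ofReal (|x.2| ^ α * d2 x ^ 2) with hG2
  have habs_rpow : Measurable fun x : (Fin k → ℝ) × ℝ => |x.2| ^ α :=
    ((continuous_abs.comp continuous_snd).rpow_const
      (fun x => Or.inr (by linarith))).measurable
  have hG1m : Measurable G1 := (habs_rpow.mul (hd1m.pow_const 2)).ennreal_ofReal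
  have hG2m : Measurable G2 := (habs_rpow.mul (hd2m.pow_const 2)).ennreal_ofReal
  set Jf : (Fin k → ℝ) → ℝ≥0∞ := fun p' => ∫⁻ t in Ioo 0 H, G1 (p', t) with hJf
  set Kf : (Fin k → ℝ) → ℝ≥0∞ := fun p' => ∫⁻ t in Ioo 0 H, G2 (p', t) with hKf
  have hJfm : Measurable Jf := by
    apply Measurable.lintegral_prod_right
    exact hG1m.comp (measurable_fst.prodMk measurable_snd)
  have hKfm : Measurable Kf := by
    apply Measurable.lintegral_prod_right
    exact hG2m.comp (measurable_fst.prodMk measurable_snd)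
  have tonelli : ∀ G : (Fin k → ℝ) × ℝ → ℝ≥0∞, Measurable G →
      (∫⁻ p' in P, ∫⁻ t in Ioo 0 H, G (p', t)) = ∫⁻ x in P ×ˢ Ioo 0 H, G x := by
    intro G hG
    rw [show (volume : Measure ((Fin k → ℝ) × ℝ)).restrict (P ×ˢ Ioo 0 H)
        = ((volume : Measure (Fin k → ℝ)).restrict P).prod
            ((volume : Measure ℝ).restrict (Ioo 0 H)) by
      rw [Measure.volume_eq_prod, Measure.prod_restrict]]
    rw [lintegral_prod G hG.aemeasurable]
  -- the 1D lintegrals coincide with Jf, Kf on P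
  have hJKrw : ∀ p' ∈ P,
      ((∫⁻ s in Ioo 0 H, ENNReal.ofReal (s ^ α * deriv (fun s => z (p', s)) s ^ 2)) = Jf p'
      ∧ (∫⁻ s in Ioo 0 H,
          ENNReal.ofReal (s ^ α * deriv (deriv (fun s => z (p', s))) s ^ 2)) = Kf p') := by
    intro p' hp
    constructor
    · apply setLIntegral_congr_fun measurableSet_Ioo ?_
      intro s hs
      rw [hG1]
      simp only
      rw [abs_of_pos hs.1, hd1eq p' hp s hs]
    · apply setLIntegral_congr_fun measurableSet_Ioo ?_
      intro s hs
      rw [hG2]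
      simp only
      rw [abs_of_pos hs.1, hd2eq p' hp s hs]
  -- identify the Bochner integrals with lintegrals of G1, G2
  set A : ℝ := ∫ x in P ×ˢ Ioo 0 H, (deriv (fun s => z (x.1, s)) x.2) ^ 2 * x.2 ^ α with hAdef
  set B : ℝ := ∫ x in P ×ˢ Ioo 0 H,
      (deriv (deriv (fun s => z (x.1, s))) x.2) ^ 2 * x.2 ^ α with hBdef
  have hA0 : 0 ≤ A := setIntegral_nonneg hSm (fun x hx =>
    mul_nonneg (sq_nonneg _) (Real.rpow_nonneg hx.2.1.le _))
  have hB0 : 0 ≤ B := setIntegral_nonneg hSm (fun x hx =>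
    mul_nonneg (sq_nonneg _) (Real.rpow_nonneg hx.2.1.le _))
  have hAeq : ENNReal.ofReal A = ∫⁻ x in P ×ˢ Ioo 0 H, G1 x := by
    rw [hAdef, ofReal_integral_eq_lintegral_ofReal hI1
      (ae_restrict_of_forall_mem hSm (fun x hx =>
        mul_nonneg (sq_nonneg _) (Real.rpow_nonneg hx.2.1.le _)))]
    apply setLIntegral_congr_fun hSm ?_
    intro x hx
    rw [hG1]
    simp only
    rw [abs_of_pos hx.2.1, ← hd1eq x.1 hx.1 x.2 hx.2, mul_comm]
  have hBeq : ENNReal.ofReal B = ∫⁻ x in P ×ˢ Ioo 0 H, G2 x := by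
    rw [hBdef, ofReal_integral_eq_lintegral_ofReal hI2
      (ae_restrict_of_forall_mem hSm (fun x hx =>
        mul_nonneg (sq_nonneg _) (Real.rpow_nonneg hx.2.1.le _)))]
    apply setLIntegral_congr_fun hSm ?_
    intro x hx
    rw [hG2]
    simp only
    rw [abs_of_pos hx.2.1, ← hd2eq x.1 hx.1 x.2 hx.2, mul_comm]
  constructor
  · -- the trace inequality
    intro t ht
    calc ∫⁻ p' in P, ENNReal.ofReal (t ^ α * (deriv (fun s => z (p', s)) t) ^ 2)
        ≤ ∫⁻ p' in P, (ENNReal.ofReal C * (Jf p' + Kf p')) := by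
          apply setLIntegral_mono' hPm
          intro p' hp
          have h := h1D _ (hfC1 p' hp) t ht
          rwa [(hJKrw p' hp).1, (hJKrw p' hp).2] at h
      _ = ENNReal.ofReal C * ((∫⁻ p' in P, Jf p') + ∫⁻ p' in P, Kf p') := by
          rw [lintegral_const_mul' _ _ ENNReal.ofReal_ne_top, lintegral_add_left hJfm]
      _ = ENNReal.ofReal C * (ENNReal.ofReal A + ENNReal.ofReal B) := by
          rw [hJf, hKf, tonelli _ hG1m, tonelli _ hG2m, ← hAeq, ← hBeq]
      _ = ENNReal.ofReal (C * (A + B)) := by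
          rw [← ENNReal.ofReal_add hA0 hB0, ← ENNReal.ofReal_mul hCpos.le]
  · -- the limit
    have hfin : (∫⁻ p' in P, (Jf p' + Kf p')) ≠ ⊤ := by
      rw [lintegral_add_left hJfm, hJf, hKf, tonelli _ hG1m, tonelli _ hG2m, ← hAeq, ← hBeq]
      exact ENNReal.add_ne_top.mpr ⟨ENNReal.ofReal_ne_top, ENNReal.ofReal_ne_top⟩
    set mf : (Fin k → ℝ) → ℝ := fun p' => (Jf p' + Kf p').toReal with hmf
    have hmfm : Measurable mf := (hJfm.add hKfm).ennreal_toReal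
    have hmf0 : ∀ p', 0 ≤ mf p' := fun p' => ENNReal.toReal_nonneg
    have hmf_int : IntegrableOn mf P :=
      integrable_toReal_of_lintegral_ne_top (hJfm.add hKfm).aemeasurable hfin
    set φ : (Fin k → ℝ) → ℝ := fun p' => Real.sqrt (C * mf p') with hφ
    have hφm : Measurable φ := Real.continuous_sqrt.measurable.comp (hmfm.const_mul C)
    have hφ0 : ∀ p', 0 ≤ φ p' := fun p' => Real.sqrt_nonneg _
    have hφint : IntegrableOn φ P := by
      apply Integrable.mono' ((integrableOn_const (C := (1:ℝ))
        hPb.measure_lt_top.ne).add (hmf_int.const_mul C)) hφm.aestronglyMeasurable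
      filter_upwards with p'
      rw [Real.norm_eq_abs, abs_of_nonneg (hφ0 p')]
      simp only [Pi.add_apply]
      have hy : 0 ≤ C * mf p' := mul_nonneg hCpos.le (hmf0 p')
      nlinarith [Real.sq_sqrt hy, Real.sqrt_nonneg (C * mf p'), sq_nonneg (Real.sqrt (C * mf p') - 1)]
    set K₀ : ℝ := ∫ p' in P, φ p' with hK₀
    have hae : ∀ᵐ p' ∂(volume.restrict P), (Jf p' + Kf p') ≠ ⊤ :=
      (ae_lt_top (hJfm.add hKfm) hfin).mono fun _ h => h.ne
    have hb : ∀ t ∈ Ioo (0:ℝ) H,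
        (∫ p' in P, |deriv (fun s => z (p', s)) t| * t ^ α) ≤ K₀ * t ^ (α/2) := by
      intro t ht
      have hbd : ∀ᵐ p' ∂(volume.restrict P),
          |deriv (fun s => z (p', s)) t| * t ^ α ≤ φ p' * t ^ (α/2) := by
        filter_upwards [hae, self_mem_ae_restrict hPm] with p' hfin' hp
        have h := h1D _ (hfC1 p' hp) t ht
        rw [(hJKrw p' hp).1, (hJKrw p' hp).2] at h
        set f := deriv (fun s => z (p', s)) with hfd
        have h4 : t ^ α * f t ^ 2 ≤ C * mf p' := by
          have h5 := ENNReal.toReal_mono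
            (ENNReal.mul_ne_top ENNReal.ofReal_ne_top hfin') h
          rwa [ENNReal.toReal_ofReal (mul_nonneg (Real.rpow_nonneg ht.1.le _)
            (sq_nonneg _)), ENNReal.toReal_mul, ENNReal.toReal_ofReal hCpos.le] at h5
        have h6 : (|f t| * t ^ α) ^ 2 ≤ (C * mf p') * t ^ α := by
          have e : (|f t| * t ^ α) ^ 2 = (t ^ α * f t ^ 2) * t ^ α := by
            rw [mul_pow, sq_abs, ← Real.rpow_natCast (t ^ α) 2,
              ← Real.rpow_mul ht.1.le]
            rw [show α * ((2:ℕ):ℝ) = α + α by push_cast; ring, Real.rpow_add ht.1]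
            ring
          rw [e]
          exact mul_le_mul_of_nonneg_right h4 (Real.rpow_nonneg ht.1.le _)
        have h7 : 0 ≤ |f t| * t ^ α :=
          mul_nonneg (abs_nonneg _) (Real.rpow_nonneg ht.1.le _)
        calc |f t| * t ^ α = Real.sqrt ((|f t| * t ^ α) ^ 2) := (Real.sqrt_sq h7).symm
          _ ≤ Real.sqrt ((C * mf p') * t ^ α) := Real.sqrt_le_sqrt h6
          _ = φ p' * t ^ (α/2) := by
              rw [Real.sqrt_mul (mul_nonneg hCpos.le (hmf0 p')), hφ]
              congr 1
              rw [Real.sqrt_eq_rpow, ← Real.rpow_mul ht.1.le,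
                show α * (1/2) = α/2 by ring]
      have hmeas_t : AEStronglyMeasurable
          (fun p' => |deriv (fun s => z (p', s)) t| * t ^ α) (volume.restrict P) := by
        apply AEStronglyMeasurable.congr
          (f := fun p' => |d1 (p', t)| * t ^ α)
        · exact (((hd1m.comp (measurable_id.prodMk measurable_const)).abs.mul_const
            _)).aestronglyMeasurable
        · filter_upwards [self_mem_ae_restrict hPm] with p' hp
          rw [hd1eq p' hp t ht]
      have hint_t : IntegrableOn (fun p' => |deriv (fun s => z (p', s)) t| * t ^ α) P := by
        apply Integrable.mono' (hφint.mul_const (t ^ (α/2))) hmeas_t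
        filter_upwards [hbd] with p' hb'
        rw [Real.norm_eq_abs, abs_of_nonneg (mul_nonneg (abs_nonneg _)
          (Real.rpow_nonneg ht.1.le _))]
        exact hb'
      calc (∫ p' in P, |deriv (fun s => z (p', s)) t| * t ^ α)
          ≤ ∫ p' in P, φ p' * t ^ (α/2) :=
            integral_mono_ae hint_t (hφint.mul_const _) hbd
        _ = K₀ * t ^ (α/2) := by rw [integral_mul_const]
    apply squeeze_zero'
    · filter_upwards [self_mem_nhdsWithin] with t ht0
      exact integral_nonneg fun p' =>
        mul_nonneg (abs_nonneg _) (Real.rpow_nonneg (le_of_lt ht0) _)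
    · filter_upwards [Ioo_mem_nhdsGT hH] with t ht
      exact hb t ht
    · have hrt : Tendsto (fun t : ℝ => t ^ (α/2)) (nhdsWithin 0 (Ioi 0)) (nhds 0) := by
        have hc : ContinuousAt (fun t : ℝ => t ^ (α/2)) 0 :=
          Real.continuousAt_rpow_const 0 (α/2) (Or.inr (by positivity))
        have h0 : (0:ℝ) ^ (α/2) = 0 := Real.zero_rpow (by positivity)
        have := hc.continuousWithinAt (s := Ioi (0:ℝ))
        rwa [ContinuousWithinAt, h0] at this
      have := hrt.const_mul K₀
      rwa [mul_zero] at this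
end
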